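/- Let q ∈ (0,1), R ≥ 1 an integer, and set p = (1-2q+q^(R+1))/(1-2q+q^R), assuming 1-2q+q^R ≠ 0 and p ∈ (0,1). With S_i as defined (P(S_i = k) = q^k(1-q) for 0 ≤ k ≤ R-i-1, P(S_i = k) = q^(R-i) p^(k-(R-i))(1-p) for k ≥ R-i), for each 0 ≤ i ≤ R we have E(S_i) = (1 - 2q + q^(i+1))/(q^i (1-q)). -/

import Mathlib

lemma aux_sum10 (q : ℝ) (n : ℕ) :
    (1-q)^2 * ∑ k ∈ Finset.range n, (k:ℝ) * q^k
      = q - (n:ℝ)*q^n*(1-q) - q^(n+1) := by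
  induction n with
  | zero => simp
  | succ m ih =>
    rw [Finset.sum_range_succ, mul_add, ih]
    push_cast
    ring

theorem stmt10 (q : ℝ) (R i : ℕ) (hq : q ∈ Set.Ioo (0:ℝ) 1) (hR : 1 ≤ R)
    (hi : i ≤ R) (hden : 1 - 2*q + q^R ≠ 0)
    (hp : (1 - 2*q + q^(R+1)) / (1 - 2*q + q^R) ∈ Set.Ioo (0:ℝ) 1) :
    ∑' k : ℕ, (k : ℝ) *
        (if k < R - i then q^k * (1-q)
         else q^(R-i) * ((1 - 2*q + q^(R+1)) / (1 - 2*q + q^R))^(k-(R-i)) *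
           (1 - (1 - 2*q + q^(R+1)) / (1 - 2*q + q^R)))
    = (1 - 2*q + q^(i+1)) / (q^i * (1-q)) := by
  obtain ⟨hq0, hq1⟩ := hq
  obtain ⟨hp0, hp1⟩ := hp
  have h1q : (1:ℝ) - q ≠ 0 := sub_ne_zero.mpr (ne_of_gt (by linarith))
  set p : ℝ := (1 - 2*q + q^(R+1)) / (1 - 2*q + q^R) with hpdef
  set n := R - i with hndef
  have hRn : n + i = R := Nat.sub_add_cancel hi
  set f : ℕ → ℝ := fun k => (k : ℝ) *
        (if k < n then q^k * (1-q)
         else q^n * p^(k-n) * (1 - p)) with hf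
  have hpabs : ‖p‖ < 1 := by rw [Real.norm_eq_abs, abs_of_pos hp0]; exact hp1
  have h1 : Summable (fun j : ℕ => (j:ℝ) * p^j) := by
    simpa using summable_pow_mul_geometric_of_norm_lt_one 1 hpabs
  have h2 : Summable (fun j : ℕ => p^j) := summable_geometric_of_lt_one hp0.le hp1
  have hfun : (fun j : ℕ => f (j + n))
      = fun j : ℕ => ((j:ℝ) * p^j) * (q^n * (1-p)) + p^j * ((n:ℝ) * (q^n * (1-p))) := by
    funext j
    simp only [hf]
    rw [if_neg (by omega)]
    have hjn : j + n - n = j := by omega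
    rw [hjn]
    push_cast
    ring
  have hg : Summable (fun j : ℕ => f (j + n)) := by
    rw [hfun]
    exact (h1.mul_right _).add (h2.mul_right _)
  have hs : Summable f := (summable_nat_add_iff n).mp hg
  have key := Summable.sum_add_tsum_nat_add n hs
  rw [← key]
  have hsum1 : ∑ k ∈ Finset.range n, f k = (1-q) * ∑ k ∈ Finset.range n, (k:ℝ)*q^k := by
    rw [Finset.mul_sum]
    refine Finset.sum_congr rfl fun k hk => ?_
    simp only [hf]
    rw [if_pos (Finset.mem_range.mp hk)]
    ring
  have hS' : ∑ k ∈ Finset.range n, (k:ℝ)*q^k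
      = (q - (n:ℝ)*q^n*(1-q) - q^(n+1))/(1-q)^2 := by
    rw [eq_div_iff (pow_ne_zero 2 h1q)]
    linear_combination aux_sum10 q n
  have hsum2 : ∑' j : ℕ, f (j + n)
      = (p/(1-p)^2) * (q^n * (1-p)) + (1-p)⁻¹ * ((n:ℝ) * (q^n * (1-p))) := by
    rw [hfun, Summable.tsum_add (h1.mul_right _) (h2.mul_right _), tsum_mul_right, tsum_mul_right,
      tsum_coe_mul_geometric_of_norm_lt_one hpabs, tsum_geometric_of_lt_one hp0.le hp1]
  rw [hsum1, hS', hsum2]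
  have h1p0 : (1:ℝ) - p ≠ 0 := sub_ne_zero.mpr (ne_of_gt (by linarith))
  have h1p : 1 - p = q^R*(1-q) / (1 - 2*q + q^R) := by
    rw [hpdef]
    field_simp
    ring
  have hqn0 : q^n ≠ 0 := pow_ne_zero _ (ne_of_gt hq0)
  have hqi0 : q^i ≠ 0 := pow_ne_zero _ (ne_of_gt hq0)
  have hqR : q^R = q^n * q^i := by rw [← hRn, pow_add]
  have hqR1 : q^(R+1) = q^n * q^i * q := by rw [pow_succ, hqR]
  have hqn1 : q^(n+1) = q^n * q := pow_succ q n
  have hqi1 : q^(i+1) = q^i * q := pow_succ q i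
  rw [h1p, hpdef, hqR, hqR1, hqn1, hqi1]
  rw [hqR] at hden
  field_simp
  rw [mul_div_cancel_left₀ _ (by convert hden using 2; ring)]
  ring
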